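/- Under the assumptions of the previous lemma, combining with the product bound, if additionally 0 < a < 1, then for all n ≥ 1: ‖x_{n+1} - x*‖ ≤ N·(1/(n+1))^{a(1-c)}·2^{a(1-c)} + ∑_{i=1}^{n} (a/i²)·((i+1)/(n+1))^{a(1-c)}·‖ξ_i‖. -/

import Mathlib

lemma step_rpow {b : ℝ} (hb0 : 0 < b) {k : ℕ} (hk : 1 ≤ k) :
    1 - b / k ≤ ((k : ℝ) / ((k : ℝ) + 1)) ^ b := by
  have hk0 : (0:ℝ) < k := by exact_mod_cast hk
  have hpos : (0:ℝ) < (k:ℝ) / ((k:ℝ)+1) := by positivity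
  have hlog : Real.log (((k:ℝ)+1) / k) ≤ 1 / k := by
    calc Real.log (((k:ℝ)+1) / k) ≤ ((k:ℝ)+1)/k - 1 :=
          Real.log_le_sub_one_of_pos (by positivity)
      _ = 1 / k := by field_simp; ring
  have hlog2 : Real.log ((k:ℝ) / ((k:ℝ)+1)) = - Real.log (((k:ℝ)+1)/k) := by
    rw [← Real.log_inv]; congr 1; field_simp
  rw [Real.rpow_def_of_pos hpos, hlog2]
  have h1 : -(b / k) + 1 ≤ Real.exp (-(b/k)) := Real.add_one_le_exp _
  have h2 : Real.exp (-(b/k)) ≤ Real.exp (-Real.log (((k:ℝ)+1)/k) * b) := by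
    apply Real.exp_le_exp.mpr
    have h3 := mul_le_mul_of_nonneg_left hlog hb0.le
    rw [mul_one_div] at h3
    have h4 : -Real.log (((k:ℝ)+1)/k) * b = -(b * Real.log (((k:ℝ)+1)/k)) := by ring
    linarith
  linarith

lemma prod_rpow_bound {b : ℝ} (hb0 : 0 < b) (hb1 : b < 1) :
    ∀ m n : ℕ, m ≤ n →
      ∏ i ∈ Finset.Icc (m+1) n, (1 - b / (i:ℝ)) ≤ (((m:ℝ)+1) / ((n:ℝ)+1)) ^ b := by
  intro m n h
  induction n, h using Nat.le_induction with
  | base =>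
    rw [Finset.Icc_eq_empty (by omega), Finset.prod_empty, div_self (by positivity),
      Real.one_rpow]
  | succ n hmn ih =>
    rw [Finset.prod_Icc_succ_top (by omega : m+1 ≤ n+1)]
    push_cast
    have hfac0 : 0 ≤ 1 - b/((n:ℝ)+1) := by
      have : b/((n:ℝ)+1) ≤ b := div_le_self hb0.le (by have := Nat.cast_nonneg (α := ℝ) n; linarith)
      linarith
    have hfac : 1 - b/((n:ℝ)+1) ≤ (((n:ℝ)+1)/((n:ℝ)+2)) ^ b := by
      have := step_rpow hb0 (k := n+1) (by omega)
      push_cast at this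
      convert this using 3 <;> ring
    calc (∏ i ∈ Finset.Icc (m+1) n, (1 - b / (i:ℝ))) * (1 - b/((n:ℝ)+1))
        ≤ (((m:ℝ)+1)/((n:ℝ)+1))^b * (((n:ℝ)+1)/((n:ℝ)+2))^b :=
          mul_le_mul ih hfac hfac0 (Real.rpow_nonneg (by positivity) _)
      _ = (((m:ℝ)+1)/((n:ℝ)+1+1))^b := by
          rw [← Real.mul_rpow (by positivity) (by positivity)]
          congr 1
          have hne : (n:ℝ)+1 ≠ 0 := by positivity
          rw [div_mul_div_comm, mul_comm ((m:ℝ)+1), mul_div_mul_left _ _ hne,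
            show (n:ℝ)+1+1 = (n:ℝ)+2 from by ring]



theorem mann_error_bound_rpow {B : Type*} [NormedAddCommGroup B] [NormedSpace ℝ B]
    (F : B → B) (c : ℝ) (hc0 : 0 ≤ c) (hc1 : c < 1)
    (hF : ∀ x y : B, ‖F x - F y‖ ≤ c * ‖x - y‖)
    (xstar : B) (hfix : F xstar = xstar)
    (a : ℝ) (ha0 : 0 < a) (ha1 : a < 1) (hac : a * (1 - c) < 1)
    (ξ : ℕ → B) (x : ℕ → B)
    (hrec : ∀ n : ℕ, 1 ≤ n →
      x (n + 1) = (1 - a / n) • x n + (a / n) • (F (x n) + ((n : ℝ)⁻¹) • ξ n))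
    (N : ℝ) (hN : ‖x 1 - xstar‖ ≤ N) :
    ∀ n : ℕ, 1 ≤ n →
      ‖x (n + 1) - xstar‖ ≤
        N * ((1 : ℝ) / ((n : ℝ) + 1)) ^ (a * (1 - c)) * 2 ^ (a * (1 - c)) +
        ∑ i ∈ Finset.Icc 1 n, (a / (i : ℝ) ^ 2) *
          (((i : ℝ) + 1) / ((n : ℝ) + 1)) ^ (a * (1 - c)) * ‖ξ i‖ := by
  set b := a * (1 - c) with hb
  have hb0 : 0 < b := mul_pos ha0 (by linarith)
  have hb1 : b < 1 := hac
  have hN0 : 0 ≤ N := le_trans (norm_nonneg _) hN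
  -- one-step recursion bound
  have key : ∀ n : ℕ, 1 ≤ n →
      ‖x (n + 1) - xstar‖ ≤ (1 - b / n) * ‖x n - xstar‖ + (a / (n:ℝ)^2) * ‖ξ n‖ := by
    intro n hn
    have hn0 : (0:ℝ) < n := by exact_mod_cast hn
    have hn1 : (1:ℝ) ≤ n := by exact_mod_cast hn
    have han : a / n ≤ a := div_le_self ha0.le hn1
    have han0 : 0 ≤ a / n := by positivity
    have hexp : x (n + 1) - xstar =
        ((1 - a / n) • (x n - xstar) + (a / n) • (F (x n) - F xstar))
          + (a / n * (n:ℝ)⁻¹) • ξ n := by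
      rw [hrec n hn, hfix]
      module
    rw [hexp]
    have h1 : ‖((1 - a / n) • (x n - xstar) + (a / n) • (F (x n) - F xstar))
          + (a / n * (n:ℝ)⁻¹) • ξ n‖ ≤
        ‖(1 - a / n) • (x n - xstar)‖ + ‖(a / n) • (F (x n) - F xstar)‖
          + ‖(a / n * (n:ℝ)⁻¹) • ξ n‖ :=
      le_trans (norm_add_le _ _) (by gcongr; exact norm_add_le _ _)
    have e1 : ‖(1 - a / n) • (x n - xstar)‖ = (1 - a / n) * ‖x n - xstar‖ := by
      rw [norm_smul, Real.norm_of_nonneg (by linarith)]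
    have e2 : ‖(a / n) • (F (x n) - F xstar)‖ ≤ (a / n) * (c * ‖x n - xstar‖) := by
      rw [norm_smul, Real.norm_of_nonneg han0]
      exact mul_le_mul_of_nonneg_left (hF _ _) han0
    have e3 : ‖(a / n * (n:ℝ)⁻¹) • ξ n‖ = (a / (n:ℝ)^2) * ‖ξ n‖ := by
      rw [norm_smul, Real.norm_of_nonneg (by positivity)]
      congr 1
      rw [sq, ← div_div, div_eq_mul_inv (a / (n:ℝ)) (n:ℝ)]
    have hcoef : (1 - a / n) + (a / n) * c = 1 - b / n := by
      rw [hb]; field_simp; ring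
    nlinarith [norm_nonneg (x n - xstar)]
  -- product-form bound by induction
  have claim : ∀ n : ℕ, 1 ≤ n →
      ‖x (n + 1) - xstar‖ ≤ (∏ i ∈ Finset.Icc 1 n, (1 - b / (i:ℝ))) * N +
        ∑ i ∈ Finset.Icc 1 n, (a / (i:ℝ)^2) *
          (∏ j ∈ Finset.Icc (i+1) n, (1 - b / (j:ℝ))) * ‖ξ i‖ := by
    intro n hn
    induction n, hn using Nat.le_induction with
    | base =>
      have h := key 1 le_rfl
      simp only [Nat.cast_one] at h ⊢
      have : ‖x 2 - xstar‖ ≤ (1 - b) * N + a * ‖ξ 1‖ := by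
        have hmul : (1 - b / 1) * ‖x 1 - xstar‖ ≤ (1 - b) * N := by
          rw [div_one]
          exact mul_le_mul_of_nonneg_left hN (by linarith)
        have : a / (1:ℝ)^2 = a := by norm_num
        nlinarith [norm_nonneg (ξ 1)]
      simpa using this
    | succ n hn ih =>
      have h := key (n+1) (by omega)
      push_cast at h
      have hfac0 : 0 ≤ 1 - b / ((n:ℝ)+1) := by
        have : b / ((n:ℝ)+1) ≤ b := div_le_self hb0.le (by
          have := Nat.cast_nonneg (α := ℝ) n; linarith)
        linarith
      have step1 : ‖x (n+1+1) - xstar‖ ≤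
          (1 - b / ((n:ℝ)+1)) * ((∏ i ∈ Finset.Icc 1 n, (1 - b / (i:ℝ))) * N +
            ∑ i ∈ Finset.Icc 1 n, (a / (i:ℝ)^2) *
              (∏ j ∈ Finset.Icc (i+1) n, (1 - b / (j:ℝ))) * ‖ξ i‖)
            + (a / ((n:ℝ)+1)^2) * ‖ξ (n+1)‖ := by
        have := mul_le_mul_of_nonneg_left ih hfac0
        linarith
      refine le_trans step1 (le_of_eq ?_)
      rw [Finset.prod_Icc_succ_top (by omega : 1 ≤ n+1),
        Finset.sum_Icc_succ_top (by omega : 1 ≤ n+1),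
        Finset.Icc_eq_empty (by omega : ¬ (n+1+1 ≤ n+1)), Finset.prod_empty]
      have hsum_eq : ∑ k ∈ Finset.Icc 1 n,
            (a / (k:ℝ)^2 * ∏ j ∈ Finset.Icc (k+1) (n+1), (1 - b / (j:ℝ))) * ‖ξ k‖
          = ∑ k ∈ Finset.Icc 1 n, (1 - b/((n:ℝ)+1)) *
            ((a / (k:ℝ)^2 * ∏ j ∈ Finset.Icc (k+1) n, (1 - b / (j:ℝ))) * ‖ξ k‖) := by
        refine Finset.sum_congr rfl fun k hk => ?_
        have hk2 := (Finset.mem_Icc.mp hk).2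
        rw [Finset.prod_Icc_succ_top (by omega : k+1 ≤ n+1)]
        push_cast
        ring
      rw [hsum_eq, ← Finset.mul_sum]
      push_cast
      ring
  intro n hn
  refine le_trans (claim n hn) ?_
  have hprod : (∏ i ∈ Finset.Icc 1 n, (1 - b / (i:ℝ))) * N ≤
      N * ((1:ℝ) / ((n:ℝ)+1)) ^ b * 2 ^ b := by
    have h1 : (∏ i ∈ Finset.Icc 1 n, (1 - b / (i:ℝ))) ≤ ((1:ℝ) / ((n:ℝ)+1)) ^ b := by
      have := prod_rpow_bound hb0 hb1 0 n (by omega)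
      simpa using this
    have h2 : (1:ℝ) ≤ (2:ℝ) ^ b := Real.one_le_rpow (by norm_num) hb0.le
    calc (∏ i ∈ Finset.Icc 1 n, (1 - b / (i:ℝ))) * N
        ≤ ((1:ℝ) / ((n:ℝ)+1)) ^ b * N :=
          mul_le_mul_of_nonneg_right h1 hN0
      _ = N * ((1:ℝ) / ((n:ℝ)+1)) ^ b * 1 := by ring
      _ ≤ N * ((1:ℝ) / ((n:ℝ)+1)) ^ b * 2 ^ b := by
          have : 0 ≤ N * ((1:ℝ) / ((n:ℝ)+1)) ^ b := by positivity
          exact mul_le_mul_of_nonneg_left h2 this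
  have hsum : ∑ i ∈ Finset.Icc 1 n, (a / (i:ℝ)^2) *
      (∏ j ∈ Finset.Icc (i+1) n, (1 - b / (j:ℝ))) * ‖ξ i‖ ≤
      ∑ i ∈ Finset.Icc 1 n, (a / (i:ℝ)^2) *
        (((i:ℝ)+1) / ((n:ℝ)+1)) ^ b * ‖ξ i‖ := by
    apply Finset.sum_le_sum
    intro i hi
    rw [Finset.mem_Icc] at hi
    have hp := prod_rpow_bound hb0 hb1 i n hi.2
    have hi0 : (0:ℝ) < i := by exact_mod_cast hi.1
    have hprod0 : 0 ≤ ∏ j ∈ Finset.Icc (i+1) n, (1 - b / (j:ℝ)) := by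
      apply Finset.prod_nonneg
      intro j hj
      rw [Finset.mem_Icc] at hj
      have hj1 : (1:ℝ) ≤ j := by exact_mod_cast (by omega : 1 ≤ j)
      have : b / (j:ℝ) ≤ b := div_le_self hb0.le hj1
      linarith
    gcongr
  linarith
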